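/- arXiv:1902.04556 — 3 statements merged into one kernel-verified Lean document; each statement's English description precedes it below -/
import Mathlib

section
/- Fix positive integers M and K, a user index k in {1,...,K}, positive reals rho and tau, and positive large-scale fading coefficients beta_{m,k'} > 0 for m = 1,...,M and k' = 1,...,K. Define gamma_{m,k'} = rho*tau*beta_{m,k'}^2/(1 + rho*tau*beta_{m,k'}). Let eta_1, ..., eta_K be power control coefficients in [0,1] with eta_k > 0, and define SINR_k = rho * (sum_{m=1}^M gamma_{m,k})^2 * eta_k / ( sum_{m=1}^M gamma_{m,k} + rho * sum_{k'=1}^K eta_{k'} * sum_{m=1}^M gamma_{m,k} * beta_{m,k'} ). Then SINR_k < (sum_{m=1}^M gamma_{m,k})^2 / (sum_{m=1}^M gamma_{m,k}^2). -/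
/-- In cell-free Massive MIMO with maximum-ratio decoding, the uplink
effective SINR of user `k` under any power control `η ∈ [0,1]^K` with `η k > 0` is
strictly upper bounded by `(∑ m, γ m k)² / (∑ m, (γ m k)²)`, where
`γ m k' = ρτ (β m k')² / (1 + ρτ β m k')`. -/
theorem stmt_5 (M K : ℕ) (hM : 0 < M) (hK : 0 < K) (k : Fin K)
    (ρ τ : ℝ) (hρ : 0 < ρ) (hτ : 0 < τ)
    (β : Fin M → Fin K → ℝ) (hβ : ∀ m k', 0 < β m k')
    (γ : Fin M → Fin K → ℝ)
    (hγ : ∀ m k', γ m k' = ρ * τ * (β m k') ^ 2 / (1 + ρ * τ * β m k'))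
    (η : Fin K → ℝ) (hη : ∀ k', η k' ∈ Set.Icc (0 : ℝ) 1) (hηk : 0 < η k) :
    ρ * (∑ m, γ m k) ^ 2 * η k /
      (∑ m, γ m k + ρ * ∑ k', η k' * ∑ m, γ m k * β m k') <
    (∑ m, γ m k) ^ 2 / ∑ m, (γ m k) ^ 2 := by
  have hne : Nonempty (Fin M) := ⟨⟨0, hM⟩⟩
  have hγpos : ∀ m k', 0 < γ m k' := by
    intro m k'
    rw [hγ]
    have hb := hβ m k'
    positivity
  have hγle : ∀ m, γ m k ≤ β m k := by
    intro m
    have hb := hβ m k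
    rw [hγ, div_le_iff₀ (by positivity)]
    nlinarith
  have hSpos : 0 < ∑ m, γ m k :=
    Finset.sum_pos (fun m _ => hγpos m k) Finset.univ_nonempty
  have hQpos : 0 < ∑ m, (γ m k) ^ 2 :=
    Finset.sum_pos (fun m _ => pow_pos (hγpos m k) 2) Finset.univ_nonempty
  have hQT : ∑ m, (γ m k) ^ 2 ≤ ∑ m, γ m k * β m k := by
    apply Finset.sum_le_sum
    intro m _
    have := hγle m
    nlinarith [hγpos m k]
  have hTnonneg : ∀ k', 0 ≤ η k' * ∑ m, γ m k * β m k' := by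
    intro k'
    have h1 := (hη k').1
    have h2 : 0 ≤ ∑ m, γ m k * β m k' :=
      Finset.sum_nonneg fun m _ => le_of_lt (mul_pos (hγpos m k) (hβ m k'))
    exact mul_nonneg h1 h2
  have hsum : η k * ∑ m, γ m k * β m k ≤ ∑ k', η k' * ∑ m, γ m k * β m k' :=
    Finset.single_le_sum (fun k' _ => hTnonneg k') (Finset.mem_univ k)
  have hDgt : ρ * η k * ∑ m, (γ m k) ^ 2 <
      ∑ m, γ m k + ρ * ∑ k', η k' * ∑ m, γ m k * β m k' := by
    have h1 : η k * ∑ m, (γ m k) ^ 2 ≤ η k * ∑ m, γ m k * β m k :=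
      mul_le_mul_of_nonneg_left hQT (le_of_lt hηk)
    nlinarith
  have hDpos : 0 < ∑ m, γ m k + ρ * ∑ k', η k' * ∑ m, γ m k * β m k' := by
    have : 0 ≤ ρ * η k * ∑ m, (γ m k) ^ 2 := by positivity
    linarith
  rw [div_lt_div_iff₀ hDpos hQpos]
  nlinarith [mul_lt_mul_of_pos_left hDgt (pow_pos hSpos 2)]
end

section
/- Fix positive integers M and K, positive reals rho and tau, and positive large-scale fading coefficients beta_{m,k} > 0 for m = 1,...,M and k = 1,...,K; define gamma_{m,k} = rho*tau*beta_{m,k}^2/(1 + rho*tau*beta_{m,k}). Suppose eta_1, ..., eta_K are power control coefficients with 0 < eta_k <= 1 for all k, and suppose there is a common value zeta such that for every k, zeta = rho * (sum_{m=1}^M gamma_{m,k})^2 * eta_k / ( sum_{m=1}^M gamma_{m,k} + rho * sum_{k'=1}^K eta_{k'} * sum_{m=1}^M gamma_{m,k} * beta_{m,k'} ). Then zeta < min over k of (sum_{m=1}^M gamma_{m,k})^2 / (sum_{m=1}^M gamma_{m,k}^2). -/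
/-- In cell-free Massive MIMO with maximum-ratio decoding, if a power
control `η` with `0 < η k ≤ 1` achieves a common SINR value `ζ` for all `K` users,
then `ζ < min_k (∑ m, γ m k)² / (∑ m, (γ m k)²)`. -/
theorem stmt_7 (M K : ℕ) (hM : 0 < M) (hK : 0 < K)
    (ρ τ : ℝ) (hρ : 0 < ρ) (hτ : 0 < τ)
    (β : Fin M → Fin K → ℝ) (hβ : ∀ m k, 0 < β m k)
    (γ : Fin M → Fin K → ℝ)
    (hγ : ∀ m k, γ m k = ρ * τ * (β m k) ^ 2 / (1 + ρ * τ * β m k))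
    (η : Fin K → ℝ) (hη : ∀ k, 0 < η k ∧ η k ≤ 1)
    (ζ : ℝ)
    (hζ : ∀ k, ζ = ρ * (∑ m, γ m k) ^ 2 * η k /
      (∑ m, γ m k + ρ * ∑ k', η k' * ∑ m, γ m k * β m k')) :
    ζ < Finset.univ.inf' ⟨⟨0, hK⟩, Finset.mem_univ _⟩
      (fun k => (∑ m, γ m k) ^ 2 / ∑ m, (γ m k) ^ 2) := by
  have hMne : Nonempty (Fin M) := ⟨⟨0, hM⟩⟩
  have hγpos : ∀ m k, 0 < γ m k := by
    intro m k
    rw [hγ m k]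
    have hb := hβ m k
    positivity
  have hγltβ : ∀ m k, γ m k < β m k := by
    intro m k
    rw [hγ m k]
    have hb := hβ m k
    rw [div_lt_iff₀ (by positivity)]
    nlinarith
  refine (Finset.lt_inf'_iff _).2 ?_
  intro k _
  have hS : 0 < ∑ m, γ m k := Finset.sum_pos (fun m _ => hγpos m k) Finset.univ_nonempty
  have hQ : 0 < ∑ m, (γ m k) ^ 2 :=
    Finset.sum_pos (fun m _ => pow_pos (hγpos m k) 2) Finset.univ_nonempty
  have hηk := (hη k).1
  have h1 : ∑ m, (γ m k) ^ 2 < ∑ m, γ m k * β m k := by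
    apply Finset.sum_lt_sum_of_nonempty Finset.univ_nonempty
    intro m _
    nlinarith [hγpos m k, hγltβ m k]
  have h2 : η k * ∑ m, γ m k * β m k ≤ ∑ k', η k' * ∑ m, γ m k * β m k' := by
    apply Finset.single_le_sum (f := fun k' => η k' * ∑ m, γ m k * β m k')
      (fun k' _ => mul_nonneg (hη k').1.le
        (Finset.sum_nonneg fun m _ => (mul_pos (hγpos m k) (hβ m k')).le))
      (Finset.mem_univ k)
  have key : ρ * η k * (∑ m, (γ m k) ^ 2) <
      ∑ m, γ m k + ρ * ∑ k', η k' * ∑ m, γ m k * β m k' := by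
    nlinarith [hS, mul_lt_mul_of_pos_left h1 (mul_pos hρ hηk), mul_le_mul_of_nonneg_left h2 hρ.le]
  have hD : 0 < ∑ m, γ m k + ρ * ∑ k', η k' * ∑ m, γ m k * β m k' := by
    linarith [key, mul_pos (mul_pos hρ hηk) hQ]
  rw [hζ k, div_lt_div_iff₀ hD hQ]
  nlinarith [mul_lt_mul_of_pos_left key (pow_pos hS 2)]
end

section
/- Fix positive integers M and K, positive reals rho and tau, and positive large-scale fading coefficients beta_1, ..., beta_K > 0; define gamma_k = rho*tau*beta_k^2/(1 + rho*tau*beta_k) and eta_k = (min over k' of gamma_{k'}) / gamma_k. Then eta in [0,1]^K, at least one eta_k equals 1, and for any other power control eta' in [0,1]^K, the minimum over k of the single-cell maximum-ratio SINRs M*rho*gamma_k*eta'_k / (1 + rho * sum_{k'} beta_{k'} * eta'_{k'}) is at most the common value M*rho / ( 1/(min over k' of gamma_{k'}) + rho * sum_{k'=1}^K beta_{k'}/gamma_{k'} ) achieved by eta. -/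
/-- In single-cell Massive MIMO with maximum-ratio decoding, the
power control `η k = (min_{k'} γ_{k'}) / γ k` lies in `[0,1]^K`, at least one of
its entries equals 1, and it maximizes the minimum SINR: for any other power
control `η' ∈ [0,1]^K`, the minimum over users of the SINRs
`M ρ γ_k η'_k / (1 + ρ ∑ β_{k'} η'_{k'})` is at most the common value
`M ρ / (1 / min_{k'} γ_{k'} + ρ ∑ β_{k'} / γ_{k'})` achieved by `η`. -/
theorem stmt_14 (M K : ℕ) (hM : 0 < M) (hK : 0 < K)
    (ρ τ : ℝ) (hρ : 0 < ρ) (hτ : 0 < τ)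
    (β : Fin K → ℝ) (hβ : ∀ k, 0 < β k)
    (γ : Fin K → ℝ) (hγ : ∀ k, γ k = ρ * τ * (β k) ^ 2 / (1 + ρ * τ * β k))
    (η : Fin K → ℝ)
    (hη : ∀ k, η k = (Finset.univ.inf' ⟨⟨0, hK⟩, Finset.mem_univ _⟩ γ) / γ k) :
    (∀ k, η k ∈ Set.Icc (0 : ℝ) 1) ∧
    (∃ k, η k = 1) ∧
    (∀ η' : Fin K → ℝ, (∀ k, η' k ∈ Set.Icc (0 : ℝ) 1) →
      Finset.univ.inf' ⟨⟨0, hK⟩, Finset.mem_univ _⟩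
          (fun k => (M : ℝ) * ρ * γ k * η' k / (1 + ρ * ∑ k', β k' * η' k')) ≤
        (M : ℝ) * ρ / (1 / (Finset.univ.inf' ⟨⟨0, hK⟩, Finset.mem_univ _⟩ γ)
          + ρ * ∑ k', β k' / γ k')) := by
  have hγpos : ∀ k, 0 < γ k := by
    intro k
    rw [hγ k]
    have hb := hβ k
    apply div_pos <;> positivity
  set g := Finset.univ.inf' ⟨⟨0, hK⟩, Finset.mem_univ _⟩ γ with hg
  obtain ⟨k0, -, hk0⟩ := Finset.exists_mem_eq_inf' ⟨⟨0, hK⟩, Finset.mem_univ _⟩ γ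
  have hgpos : 0 < g := by rw [hg, hk0]; exact hγpos k0
  have hgle : ∀ k, g ≤ γ k := fun k =>
    Finset.inf'_le _ (Finset.mem_univ k)
  refine ⟨?_, ⟨k0, ?_⟩, ?_⟩
  · intro k
    rw [hη k]
    constructor
    · exact div_nonneg hgpos.le (hγpos k).le
    · rw [div_le_one (hγpos k)]; exact hgle k
  · rw [hη k0, ← hk0, div_self (ne_of_gt hgpos)]
  · intro η' hη'
    obtain ⟨k1, -, hk1⟩ := Finset.exists_mem_eq_inf' (⟨⟨0, hK⟩, Finset.mem_univ _⟩ :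
      Finset.univ.Nonempty) (fun k => γ k * η' k)
    set m := Finset.univ.inf' ⟨⟨0, hK⟩, Finset.mem_univ _⟩ (fun k => γ k * η' k) with hm
    have hmle : ∀ k, m ≤ γ k * η' k := fun k =>
      Finset.inf'_le _ (Finset.mem_univ k)
    have hm0 : 0 ≤ m := hk1 ▸ mul_nonneg (hγpos k1).le (hη' k1).1
    have hS0 : 0 ≤ ∑ k', β k' * η' k' :=
      Finset.sum_nonneg fun k _ => mul_nonneg (hβ k).le (hη' k).1
    have hT0 : 0 < ∑ k', β k' / γ k' := by
      apply Finset.sum_pos (fun k _ => div_pos (hβ k) (hγpos k)) ⟨⟨0, hK⟩, Finset.mem_univ _⟩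
    have hden1 : (0:ℝ) < 1 + ρ * ∑ k', β k' * η' k' := by positivity
    have hden2 : (0:ℝ) < 1 / g + ρ * ∑ k', β k' / γ k' := by positivity
    calc Finset.univ.inf' ⟨⟨0, hK⟩, Finset.mem_univ _⟩
          (fun k => (M : ℝ) * ρ * γ k * η' k / (1 + ρ * ∑ k', β k' * η' k'))
        ≤ (M : ℝ) * ρ * γ k1 * η' k1 / (1 + ρ * ∑ k', β k' * η' k') :=
          Finset.inf'_le _ (Finset.mem_univ k1)
      _ ≤ (M : ℝ) * ρ / (1 / g + ρ * ∑ k', β k' / γ k') := by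
          rw [div_le_div_iff₀ hden1 hden2]
          have h1 : γ k1 * η' k1 = m := hk1.symm
          have hMρ : (0:ℝ) < (M:ℝ) * ρ := by positivity
          have key : m * (1 / g + ρ * ∑ k', β k' / γ k') ≤ 1 + ρ * ∑ k', β k' * η' k' := by
            rw [mul_add]
            apply add_le_add
            · rw [mul_one_div, div_le_one hgpos]
              calc m ≤ γ k0 * η' k0 := hmle k0
                _ ≤ γ k0 * 1 := by
                    exact mul_le_mul_of_nonneg_left (hη' k0).2 (hγpos k0).le
                _ = g := by rw [mul_one, hg, hk0]
            · rw [mul_comm m, mul_assoc]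
              apply mul_le_mul_of_nonneg_left _ hρ.le
              rw [Finset.sum_mul]
              apply Finset.sum_le_sum
              intro k _
              rw [div_mul_eq_mul_div, div_le_iff₀ (hγpos k)]
              calc β k * m ≤ β k * (γ k * η' k) :=
                    mul_le_mul_of_nonneg_left (hmle k) (hβ k).le
                _ = β k * η' k * γ k := by ring
          calc (M : ℝ) * ρ * γ k1 * η' k1 * (1 / g + ρ * ∑ k', β k' / γ k')
              = (M : ℝ) * ρ * (m * (1 / g + ρ * ∑ k', β k' / γ k')) := by
                rw [mul_assoc ((M:ℝ)*ρ), h1, mul_assoc]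
            _ ≤ (M : ℝ) * ρ * (1 + ρ * ∑ k', β k' * η' k') :=
                mul_le_mul_of_nonneg_left key hMρ.le
end
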